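/- arXiv:2303.02553 — 2 statements merged into one kernel-verified Lean document; each statement's English description precedes it below -/
import Mathlib

section
/- Let N ≥ 2 and let d_1, ..., d_N be positive integers with d_max = max{d_1,...,d_N} and D = d_1⋯d_N. Then ⌈(∑_{m=1}^N D/d_m - 1)/(N-1)⌉ ≥ D/d_max + ⌊(D/d_max - 2)/(N-1)⌋ + 1. -/
theorem stmt_3 (N : ℕ) (hN : 2 ≤ N) (d : Fin N → ℕ) (hd : ∀ m, 0 < d m)
    (m0 : Fin N) (hm0 : ∀ i, d i ≤ d m0) :
    ((∏ i ∈ Finset.univ.erase m0, (d i : ℚ)) +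
        ⌊((∏ i ∈ Finset.univ.erase m0, (d i : ℚ)) - 2) / ((N : ℚ) - 1)⌋ + 1 : ℚ) ≤
      ⌈((∑ m, ∏ i ∈ Finset.univ.erase m, (d i : ℚ)) - 1) / ((N : ℚ) - 1)⌉ := by
  set P : ℕ := ∏ i ∈ Finset.univ.erase m0, d i with hPdef
  set S : ℕ := ∑ m, ∏ i ∈ Finset.univ.erase m, d i with hSdef
  have hPm : ∀ m : Fin N, P ≤ ∏ i ∈ Finset.univ.erase m, d i := by
    intro m
    have h1 : d m0 * P = d m * ∏ i ∈ Finset.univ.erase m, d i := by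
      rw [hPdef, Finset.mul_prod_erase _ _ (Finset.mem_univ m0),
        Finset.mul_prod_erase _ _ (Finset.mem_univ m)]
    have h2 : d m0 * P ≤ d m0 * ∏ i ∈ Finset.univ.erase m, d i := by
      rw [h1]; exact Nat.mul_le_mul_right _ (hm0 m)
    exact Nat.le_of_mul_le_mul_left h2 (hd m0)
  have hS : N * P ≤ S := by
    calc N * P = ∑ _m : Fin N, P := by
          rw [Finset.sum_const, Finset.card_univ, Fintype.card_fin, smul_eq_mul]
    _ ≤ S := Finset.sum_le_sum (fun m _ => hPm m)
  have hgp : (∏ i ∈ Finset.univ.erase m0, (d i : ℚ)) = (P : ℚ) :=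
    (Nat.cast_prod _ _).symm
  have hgs : (∑ m, ∏ i ∈ Finset.univ.erase m, (d i : ℚ)) = (S : ℚ) := by
    rw [hSdef]; push_cast; rfl
  rw [hgp, hgs]
  have hk : (0 : ℚ) < (N : ℚ) - 1 := by
    have : (2 : ℚ) ≤ (N : ℚ) := by exact_mod_cast hN
    linarith
  set f : ℤ := ⌊((P : ℚ) - 2) / ((N : ℚ) - 1)⌋ with hf
  have hfloor : (f : ℚ) ≤ ((P : ℚ) - 2) / ((N : ℚ) - 1) := Int.floor_le _
  have key : ((P : ℤ) + f) < ⌈((S : ℚ) - 1) / ((N : ℚ) - 1)⌉ := by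
    rw [Int.lt_ceil, lt_div_iff₀ hk]
    have hSq : (N : ℚ) * (P : ℚ) ≤ (S : ℚ) := by exact_mod_cast hS
    have h2 : (f : ℚ) * ((N : ℚ) - 1) ≤ (P : ℚ) - 2 := by
      rw [le_div_iff₀ hk] at hfloor; exact hfloor
    push_cast
    nlinarith
  have key2 : ((P : ℤ) + f + 1 : ℤ) ≤ ⌈((S : ℚ) - 1) / ((N : ℚ) - 1)⌉ := key
  exact_mod_cast key2
end

section
/- Let N ≥ 2, let d_1,...,d_N be positive integers with D = d_1⋯d_N, and suppose at least one d_m is even and S := ∑_{m=1}^N D/d_m - 1 is an odd multiple of N-1, i.e. S = (N-1)k' with k' odd. Suppose there exist graphs G_1,...,G_N on a common vertex set of size k' whose union is K_{k'} and such that each vertex of G_m has degree at most k' - D/d_m. Then a contradiction follows; equivalently, no such family of graphs exists. -/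
theorem stmt_8 (N k' : ℕ) (hN : 2 ≤ N) (d : Fin N → ℕ) (hd : ∀ m, 0 < d m)
    (heven : ∃ m, Even (d m)) (hodd : Odd k')
    (hS : ((N : ℤ) - 1) * k' = (∑ m, ∏ i ∈ Finset.univ.erase m, (d i : ℤ)) - 1)
    (G : Fin N → SimpleGraph (Fin k'))
    [∀ m, DecidableRel (G m).Adj]
    (hU : (⨆ m, G m) = ⊤)
    (hdeg : ∀ m v, ((G m).degree v : ℤ) ≤ (k' : ℤ) - ∏ i ∈ Finset.univ.erase m, (d i : ℤ)) :
    False := by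
  classical
  set D : Fin N → ℤ := fun m => ∏ i ∈ Finset.univ.erase m, (d i : ℤ) with hD
  -- k' > 0 since k' is odd
  have hk0 : 0 < k' := hodd.pos
  -- For each vertex v, sum of degrees ≥ k' - 1
  have hsumdeg : ∀ v : Fin k', ((k' : ℤ) - 1) ≤ ∑ m, ((G m).degree v : ℤ) := by
    intro v
    have hsub : ((⊤ : SimpleGraph (Fin k')).neighborFinset v) ⊆
        Finset.univ.biUnion (fun m => (G m).neighborFinset v) := by
      intro w hw
      rw [SimpleGraph.mem_neighborFinset, ← hU, SimpleGraph.iSup_adj] at hw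
      obtain ⟨m, hm⟩ := hw
      exact Finset.mem_biUnion.2 ⟨m, Finset.mem_univ m, (SimpleGraph.mem_neighborFinset _ _ _).2 hm⟩
    have h1 : (⊤ : SimpleGraph (Fin k')).degree v = k' - 1 := by
      simpa using SimpleGraph.complete_graph_degree (G := (⊤ : SimpleGraph (Fin k'))) v
    have h2 : (⊤ : SimpleGraph (Fin k')).degree v ≤ ∑ m, (G m).degree v := by
      calc (⊤ : SimpleGraph (Fin k')).degree v
          ≤ (Finset.univ.biUnion (fun m => (G m).neighborFinset v)).card :=
            Finset.card_le_card hsub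
        _ ≤ ∑ m, (G m).degree v := Finset.card_biUnion_le
    have := h1 ▸ h2
    push_cast
    have : ((k':ℤ) - 1) ≤ ((k' - 1 : ℕ) : ℤ) := by
      omega
    calc ((k':ℤ) - 1) ≤ ((k' - 1 : ℕ) : ℤ) := this
      _ ≤ ((∑ m, (G m).degree v : ℕ) : ℤ) := by exact_mod_cast h1 ▸ h2
      _ = ∑ m, ((G m).degree v : ℤ) := by push_cast; ring
  -- sum of bounds equals k' - 1
  have hbound : ∑ m, ((k' : ℤ) - D m) = (k' : ℤ) - 1 := by
    rw [Finset.sum_sub_distrib, Finset.sum_const, Finset.card_univ, Fintype.card_fin]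
    have : (∑ m, D m) = ((N : ℤ) - 1) * k' + 1 := by rw [hS]; ring
    rw [this]; ring
  -- each degree equals its bound
  have hexact : ∀ m v, ((G m).degree v : ℤ) = (k' : ℤ) - D m := by
    intro m v
    have hsum0 : ∑ j, (((k' : ℤ) - D j) - ((G j).degree v : ℤ)) ≤ 0 := by
      rw [Finset.sum_sub_distrib, hbound]
      linarith [hsumdeg v]
    have hnn : ∀ j ∈ Finset.univ, (0:ℤ) ≤ ((k' : ℤ) - D j) - ((G j).degree v : ℤ) := by
      intro j _; linarith [hdeg j v]
    have := Finset.sum_eq_zero_iff_of_nonneg hnn |>.1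
      (le_antisymm hsum0 (Finset.sum_nonneg hnn))
    have := this m (Finset.mem_univ m)
    linarith
  -- pick even d m, and m' ≠ m
  obtain ⟨m, hm⟩ := heven
  obtain ⟨m', hm'⟩ : ∃ m' : Fin N, m' ≠ m := by
    haveI : Nontrivial (Fin N) := Fin.nontrivial_iff_two_le.mpr hN
    exact exists_ne m
  -- D m' is even
  have hDe : Even (D m') := by
    have hmem : m ∈ Finset.univ.erase m' := Finset.mem_erase.2 ⟨Ne.symm hm', Finset.mem_univ m⟩
    have : (d m : ℤ) ∣ D m' := Finset.dvd_prod_of_mem _ hmem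
    rcases hm with ⟨c, hc⟩
    rcases this with ⟨e, he⟩
    exact ⟨c * e, by rw [he, hc]; push_cast; ring⟩
  -- each vertex of G m' has odd degree
  have hodddeg : ∀ v, Odd ((G m').degree v) := by
    intro v
    have h := hexact m' v
    have : Odd (((G m').degree v : ℤ)) := by
      rw [h]
      rcases hodd with ⟨a, ha⟩
      rcases hDe with ⟨b, hb⟩
      exact ⟨a - b, by rw [hb]; push_cast [ha]; ring⟩
    exact_mod_cast this
  -- handshaking contradiction
  have := (G m').even_card_odd_degree_vertices
  rw [show (Finset.univ.filter fun v => Odd ((G m').degree v)) = Finset.univ by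
    ext v; simp [hodddeg v]] at this
  rw [Finset.card_univ, Fintype.card_fin] at this
  exact (Nat.not_even_iff_odd.2 hodd) this
end
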